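/- Let Ω ⊆ ℝ³ be an open set and ω ∈ ℂ with ω ≠ 0. Let ε : Ω → ℂ^{3×3} be of class C², μ : Ω → ℂ^{3×3} of class C¹, and let E, H : Ω → ℂ³ be of class C², J_e : Ω → ℂ³ of class C² and J_m : Ω → ℂ³ of class C¹. Assume the time-harmonic Maxwell system holds pointwise on Ω: curl H = iωεE + J_e and curl E = −iωμH + J_m. Then for each k ∈ {1,2,3} the k-th component E_k of E satisfies, pointwise on Ω, the second-order divergence-form equation −div(ε∇E_k) = div((∂_k ε)E − ε(e_k × (J_m − iωμH)) − (i/ω) e_k div J_e), where ∇E_k = (∂₁E_k, ∂₂E_k, ∂₃E_k). -/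

import Mathlib

open Matrix MeasureTheory

noncomputable section

/-- Partial derivative of a scalar function in the j-th coordinate direction. -/
def pd3 (j : Fin 3) (f : (Fin 3 → ℝ) → ℂ) (x : Fin 3 → ℝ) : ℂ :=
  fderiv ℝ f x (Pi.single j 1)

/-- Divergence of a vector field. -/
def vdiv (F : (Fin 3 → ℝ) → Fin 3 → ℂ) (x : Fin 3 → ℝ) : ℂ :=
  ∑ j : Fin 3, pd3 j (fun y => F y j) x

/-- Curl of a vector field. -/
def vcurl (F : (Fin 3 → ℝ) → Fin 3 → ℂ) (x : Fin 3 → ℝ) : Fin 3 → ℂ :=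
  ![pd3 1 (fun y => F y 2) x - pd3 2 (fun y => F y 1) x,
    pd3 2 (fun y => F y 0) x - pd3 0 (fun y => F y 2) x,
    pd3 0 (fun y => F y 1) x - pd3 1 (fun y => F y 0) x]

/-- Gradient of a scalar function. -/
def grad3 (u : (Fin 3 → ℝ) → ℂ) (x : Fin 3 → ℝ) : Fin 3 → ℂ := fun j => pd3 j u x

/-- Cross product on ℂ³. -/
def cross3 (a b : Fin 3 → ℂ) : Fin 3 → ℂ :=
  ![a 1 * b 2 - a 2 * b 1, a 2 * b 0 - a 0 * b 2, a 0 * b 1 - a 1 * b 0]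

/-- The k-th standard basis vector of ℝ³ viewed in ℂ³. -/
def e3 (k : Fin 3) : Fin 3 → ℂ := Pi.single k 1

/-- Entrywise partial derivative of a matrix field in the k-th direction. -/
def mpd3 (k : Fin 3) (a : (Fin 3 → ℝ) → Matrix (Fin 3) (Fin 3) ℂ) (x : Fin 3 → ℝ) :
    Matrix (Fin 3) (Fin 3) ℂ :=
  Matrix.of fun i j => pd3 k (fun y => a y i j) x

section Helpers

variable {Ω : Set (Fin 3 → ℝ)} {x : Fin 3 → ℝ} {f g : (Fin 3 → ℝ) → ℂ}

lemma pd3_congr (hΩ : IsOpen Ω) (hx : x ∈ Ω) (h : ∀ y ∈ Ω, f y = g y) (j : Fin 3) :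
    pd3 j f x = pd3 j g x := by
  unfold pd3
  rw [Filter.EventuallyEq.fderiv_eq (Filter.eventually_of_mem (hΩ.mem_nhds hx) h)]

lemma pd3_sub (hf : DifferentiableAt ℝ f x) (hg : DifferentiableAt ℝ g x) (j : Fin 3) :
    pd3 j (fun y => f y - g y) x = pd3 j f x - pd3 j g x := by
  unfold pd3; rw [fderiv_fun_sub hf hg]; rfl

lemma pd3_const_mul (hf : DifferentiableAt ℝ f x) (c : ℂ) (j : Fin 3) :
    pd3 j (fun y => c * f y) x = c * pd3 j f x := by
  unfold pd3; rw [fderiv_const_mul hf c]; rfl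

lemma pd3_mul_const (hf : DifferentiableAt ℝ f x) (c : ℂ) (j : Fin 3) :
    pd3 j (fun y => f y * c) x = pd3 j f x * c := by
  unfold pd3; rw [fderiv_mul_const hf c]; simp [mul_comm]

lemma pd3_mul (hf : DifferentiableAt ℝ f x) (hg : DifferentiableAt ℝ g x) (j : Fin 3) :
    pd3 j (fun y => f y * g y) x = pd3 j f x * g x + f x * pd3 j g x := by
  unfold pd3; rw [fderiv_fun_mul hf hg]
  simp [smul_eq_mul]; ring

lemma pd3_sum {ι : Type*} [Fintype ι] {F : ι → (Fin 3 → ℝ) → ℂ}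
    (hf : ∀ i, DifferentiableAt ℝ (F i) x) (j : Fin 3) :
    pd3 j (fun y => ∑ i, F i y) x = ∑ i, pd3 j (F i) x := by
  unfold pd3; rw [fderiv_fun_sum (fun i _ => hf i)]; simp

lemma diff_pd3 (hf : ContDiffAt ℝ 2 f x) (j : Fin 3) :
    DifferentiableAt ℝ (fun y => pd3 j f y) x := by
  have h1 : ContDiffAt ℝ 1 (fderiv ℝ f) x := hf.fderiv_right (by norm_num)
  exact (h1.differentiableAt (by norm_num)).clm_apply (differentiableAt_const _)

lemma pd3_comm (hf : ContDiffAt ℝ 2 f x) (i j : Fin 3) :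
    pd3 i (fun y => pd3 j f y) x = pd3 j (fun y => pd3 i f y) x := by
  have hs := hf.isSymmSndFDerivAt (by simp [minSmoothness_of_isRCLikeNormedField])
  have hd : DifferentiableAt ℝ (fderiv ℝ f) x :=
    (hf.fderiv_right (n := 2) (m := 1) (by norm_num)).differentiableAt (by norm_num)
  have key : ∀ v w : Fin 3 → ℝ,
      fderiv ℝ (fun y => fderiv ℝ f y v) x w = fderiv ℝ (fderiv ℝ f) x w v := by
    intro v w
    rw [fderiv_clm_apply hd (differentiableAt_const v)]
    simp
  unfold pd3
  rw [key, key]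
  exact hs _ _

lemma cross_curl (E : (Fin 3 → ℝ) → Fin 3 → ℂ) (y : Fin 3 → ℝ) (k j : Fin 3) :
    cross3 (e3 k) (vcurl E y) j
      = pd3 j (fun z => E z k) y - pd3 k (fun z => E z j) y := by
  fin_cases k <;> fin_cases j <;>
    simp [cross3, e3, vcurl, Pi.single_apply]

lemma e3_sum (f : Fin 3 → ℂ) (k : Fin 3) : ∑ i, f i * e3 k i = f k := by
  fin_cases k <;> simp [e3, Fin.sum_univ_three, Pi.single_apply]

lemma vcurl_c0 (F : (Fin 3 → ℝ) → Fin 3 → ℂ) :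
    (fun z => vcurl F z 0) = fun z => pd3 1 (fun w => F w 2) z - pd3 2 (fun w => F w 1) z := by
  funext z; simp [vcurl]

lemma vcurl_c1 (F : (Fin 3 → ℝ) → Fin 3 → ℂ) :
    (fun z => vcurl F z 1) = fun z => pd3 2 (fun w => F w 0) z - pd3 0 (fun w => F w 2) z := by
  funext z; simp [vcurl]

lemma vcurl_c2 (F : (Fin 3 → ℝ) → Fin 3 → ℂ) :
    (fun z => vcurl F z 2) = fun z => pd3 0 (fun w => F w 1) z - pd3 1 (fun w => F w 0) z := by
  funext z; simp [vcurl]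

end Helpers

/-- Strong form of the divergence-form elliptic equation satisfied by each component of the
electric field (Proposition 2.1, strong form). -/
theorem stmt_0
    (Ω : Set (Fin 3 → ℝ)) (hΩ : IsOpen Ω) (ω : ℂ) (hω : ω ≠ 0)
    (ε μ : (Fin 3 → ℝ) → Matrix (Fin 3) (Fin 3) ℂ)
    (E H Je Jm : (Fin 3 → ℝ) → Fin 3 → ℂ)
    (hε : ∀ i j, ContDiffOn ℝ 2 (fun x => ε x i j) Ω)
    (hμ : ∀ i j, ContDiffOn ℝ 1 (fun x => μ x i j) Ω)
    (hE : ContDiffOn ℝ 2 E Ω) (hH : ContDiffOn ℝ 2 H Ω)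
    (hJe : ContDiffOn ℝ 2 Je Ω) (hJm : ContDiffOn ℝ 1 Jm Ω)
    (hM1 : ∀ x ∈ Ω, vcurl H x = (Complex.I * ω) • (ε x *ᵥ E x) + Je x)
    (hM2 : ∀ x ∈ Ω, vcurl E x = -((Complex.I * ω) • (μ x *ᵥ H x)) + Jm x) :
    ∀ x ∈ Ω, ∀ k : Fin 3,
      -vdiv (fun y => ε y *ᵥ grad3 (fun z => E z k) y) x
        = vdiv (fun y =>
            mpd3 k ε y *ᵥ E y
            - ε y *ᵥ cross3 (e3 k) (Jm y - (Complex.I * ω) • (μ y *ᵥ H y))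
            - ((Complex.I / ω) * vdiv Je y) • e3 k) x := by
  intro x hx k
  have cε : ∀ y ∈ Ω, ∀ i j, ContDiffAt ℝ 2 (fun z => ε z i j) y :=
    fun y hy i j => (hε i j).contDiffAt (hΩ.mem_nhds hy)
  have cE : ∀ y ∈ Ω, ∀ i, ContDiffAt ℝ 2 (fun z => E z i) y :=
    fun y hy i => contDiffAt_pi.1 (hE.contDiffAt (hΩ.mem_nhds hy)) i
  have cH : ∀ y ∈ Ω, ∀ i, ContDiffAt ℝ 2 (fun z => H z i) y :=
    fun y hy i => contDiffAt_pi.1 (hH.contDiffAt (hΩ.mem_nhds hy)) i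
  have cJe : ∀ y ∈ Ω, ∀ i, ContDiffAt ℝ 2 (fun z => Je z i) y :=
    fun y hy i => contDiffAt_pi.1 (hJe.contDiffAt (hΩ.mem_nhds hy)) i
  have cP : ∀ y ∈ Ω, ∀ i, ContDiffAt ℝ 2 (fun z => ∑ j, ε z i j * E z j) y :=
    fun y hy i => ContDiffAt.sum fun j _ => (cε y hy i j).mul (cE y hy j)
  have dε : ∀ y ∈ Ω, ∀ i j, DifferentiableAt ℝ (fun z => ε z i j) y :=
    fun y hy i j => (cε y hy i j).differentiableAt two_ne_zero
  have dE : ∀ y ∈ Ω, ∀ i, DifferentiableAt ℝ (fun z => E z i) y :=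
    fun y hy i => (cE y hy i).differentiableAt two_ne_zero
  have dvJe : ∀ y ∈ Ω, DifferentiableAt ℝ (fun z => vdiv Je z) y := by
    intro y hy
    have h : (fun z => vdiv Je z) = fun z => ∑ j : Fin 3, pd3 j (fun w => Je w j) z := rfl
    rw [h]
    exact DifferentiableAt.fun_sum fun j _ => diff_pd3 (cJe y hy j) j
  have dcurlH : ∀ y ∈ Ω, ∀ i : Fin 3, DifferentiableAt ℝ (fun z => vcurl H z i) y := by
    intro y hy i
    fin_cases i
    · show DifferentiableAt ℝ (fun z => vcurl H z 0) y
      rw [vcurl_c0]; exact (diff_pd3 (cH y hy 2) 1).sub (diff_pd3 (cH y hy 1) 2)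
    · show DifferentiableAt ℝ (fun z => vcurl H z 1) y
      rw [vcurl_c1]; exact (diff_pd3 (cH y hy 0) 2).sub (diff_pd3 (cH y hy 2) 0)
    · show DifferentiableAt ℝ (fun z => vcurl H z 2) y
      rw [vcurl_c2]; exact (diff_pd3 (cH y hy 1) 0).sub (diff_pd3 (cH y hy 0) 1)
  have hIω : Complex.I * ω ≠ 0 := mul_ne_zero Complex.I_ne_zero hω
  -- divergence of ε E equals (I/ω) div Je on Ω
  have keydiv : ∀ y ∈ Ω, (∑ i : Fin 3, pd3 i (fun z => ∑ j, ε z i j * E z j) y)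
      = (Complex.I / ω) * vdiv Je y := by
    intro y hy
    have hcomp : ∀ i : Fin 3, ∀ z ∈ Ω, (∑ j, ε z i j * E z j)
        = (Complex.I * ω)⁻¹ * (vcurl H z i - Je z i) := by
      intro i z hz
      have h2 : vcurl H z i = Complex.I * ω * (∑ j, ε z i j * E z j) + Je z i := by
        have h1 := congrFun (hM1 z hz) i
        simpa [Matrix.mulVec, dotProduct, smul_eq_mul] using h1
      rw [h2]
      field_simp
      ring
    have step : ∀ i : Fin 3, pd3 i (fun z => ∑ j, ε z i j * E z j) y
        = (Complex.I * ω)⁻¹ *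
            (pd3 i (fun z => vcurl H z i) y - pd3 i (fun z => Je z i) y) := by
      intro i
      rw [pd3_congr hΩ hy (hcomp i) i,
        pd3_const_mul ((dcurlH y hy i).fun_sub ((cJe y hy i).differentiableAt two_ne_zero)) _ i,
        pd3_sub (dcurlH y hy i) ((cJe y hy i).differentiableAt two_ne_zero) i]
    have curl0 : ∑ i : Fin 3, pd3 i (fun z => vcurl H z i) y = 0 := by
      rw [Fin.sum_univ_three, vcurl_c0, vcurl_c1, vcurl_c2,
        pd3_sub (diff_pd3 (cH y hy 2) 1) (diff_pd3 (cH y hy 1) 2) 0,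
        pd3_sub (diff_pd3 (cH y hy 0) 2) (diff_pd3 (cH y hy 2) 0) 1,
        pd3_sub (diff_pd3 (cH y hy 1) 0) (diff_pd3 (cH y hy 0) 1) 2,
        pd3_comm (cH y hy 2) 0 1, pd3_comm (cH y hy 1) 0 2, pd3_comm (cH y hy 0) 1 2]
      ring
    have hvJe : vdiv Je y = ∑ i : Fin 3, pd3 i (fun z => Je z i) y := rfl
    calc (∑ i : Fin 3, pd3 i (fun z => ∑ j, ε z i j * E z j) y)
        = ∑ i : Fin 3, (Complex.I * ω)⁻¹ *
            (pd3 i (fun z => vcurl H z i) y - pd3 i (fun z => Je z i) y) :=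
          Finset.sum_congr rfl fun i _ => step i
      _ = (Complex.I * ω)⁻¹ *
            ((∑ i : Fin 3, pd3 i (fun z => vcurl H z i) y) - vdiv Je y) := by
          rw [hvJe, ← Finset.mul_sum, Finset.sum_sub_distrib]
      _ = (Complex.I / ω) * vdiv Je y := by
          rw [curl0]
          rw [mul_inv, Complex.inv_I, div_eq_mul_inv]
          ring
  -- pointwise identity for the components of the RHS field on Ω
  have field_eq : ∀ i : Fin 3, ∀ y ∈ Ω,
      (mpd3 k ε y *ᵥ E y
        - ε y *ᵥ cross3 (e3 k) (Jm y - (Complex.I * ω) • (μ y *ᵥ H y))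
        - ((Complex.I / ω) * vdiv Je y) • e3 k) i
      = pd3 k (fun z => ∑ j, ε z i j * E z j) y
        - (∑ j, ε y i j * pd3 j (fun z => E z k) y)
        - (Complex.I / ω) * vdiv Je y * e3 k i := by
    intro i y hy
    have hcurlE : Jm y - (Complex.I * ω) • (μ y *ᵥ H y) = vcurl E y := by
      rw [hM2 y hy]; abel
    rw [hcurlE]
    have hPd : pd3 k (fun z => ∑ j, ε z i j * E z j) y
        = ∑ j, (pd3 k (fun z => ε z i j) y * E y j + ε y i j * pd3 k (fun z => E z j) y) := by
      rw [pd3_sum (fun j => (dε y hy i j).fun_mul (dE y hy j)) k]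
      exact Finset.sum_congr rfl fun j _ => pd3_mul (dε y hy i j) (dE y hy j) k
    rw [hPd]
    simp only [Pi.sub_apply, Pi.smul_apply, smul_eq_mul, Matrix.mulVec, dotProduct,
      mpd3, Matrix.of_apply, cross_curl, Fin.sum_univ_three]
    ring
  -- derivative-level identity for each component at x
  have main : ∀ i : Fin 3,
      pd3 i (fun y => (mpd3 k ε y *ᵥ E y
        - ε y *ᵥ cross3 (e3 k) (Jm y - (Complex.I * ω) • (μ y *ᵥ H y))
        - ((Complex.I / ω) * vdiv Je y) • e3 k) i) x
      = pd3 k (fun y => pd3 i (fun z => ∑ j, ε z i j * E z j) y) x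
        - pd3 i (fun y => ∑ j, ε y i j * pd3 j (fun z => E z k) y) x
        - (Complex.I / ω) * pd3 i (fun y => vdiv Je y) x * e3 k i := by
    intro i
    rw [pd3_congr hΩ hx (field_eq i) i]
    have d1 : DifferentiableAt ℝ (fun y => pd3 k (fun z => ∑ j, ε z i j * E z j) y) x :=
      diff_pd3 (cP x hx i) k
    have d2 : DifferentiableAt ℝ (fun y => ∑ j, ε y i j * pd3 j (fun z => E z k) y) x :=
      DifferentiableAt.fun_sum fun j _ => (dε x hx i j).mul (diff_pd3 (cE x hx k) j)
    have d3 : DifferentiableAt ℝ (fun y => (Complex.I / ω) * vdiv Je y * e3 k i) x :=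
      ((dvJe x hx).const_mul _).mul_const _
    rw [pd3_sub ((d1.fun_sub d2)) d3 i, pd3_sub d1 d2 i,
      pd3_mul_const ((dvJe x hx).const_mul _) _ i, pd3_const_mul (dvJe x hx) _ i,
      pd3_comm (cP x hx i) i k]
  -- assemble
  have hRHS : vdiv (fun y =>
      mpd3 k ε y *ᵥ E y
      - ε y *ᵥ cross3 (e3 k) (Jm y - (Complex.I * ω) • (μ y *ᵥ H y))
      - ((Complex.I / ω) * vdiv Je y) • e3 k) x
      = ∑ i : Fin 3,
        (pd3 k (fun y => pd3 i (fun z => ∑ j, ε z i j * E z j) y) x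
          - pd3 i (fun y => ∑ j, ε y i j * pd3 j (fun z => E z k) y) x
          - (Complex.I / ω) * pd3 i (fun y => vdiv Je y) x * e3 k i) := by
    unfold vdiv
    exact Finset.sum_congr rfl fun i _ => main i
  rw [hRHS, Finset.sum_sub_distrib, Finset.sum_sub_distrib]
  have hA : ∑ i : Fin 3, pd3 k (fun y => pd3 i (fun z => ∑ j, ε z i j * E z j) y) x
      = (Complex.I / ω) * pd3 k (fun y => vdiv Je y) x := by
    rw [← pd3_sum (fun i => diff_pd3 (cP x hx i) i) k,
      pd3_congr hΩ hx keydiv k, pd3_const_mul (dvJe x hx) _ k]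
  have hC : (∑ i : Fin 3, (Complex.I / ω) * pd3 i (fun y => vdiv Je y) x * e3 k i)
      = (Complex.I / ω) * pd3 k (fun y => vdiv Je y) x :=
    e3_sum (fun i => (Complex.I / ω) * pd3 i (fun y => vdiv Je y) x) k
  have hB : ∑ i : Fin 3, pd3 i (fun y => ∑ j, ε y i j * pd3 j (fun z => E z k) y) x
      = vdiv (fun y => ε y *ᵥ grad3 (fun z => E z k) y) x := by
    unfold vdiv
    refine Finset.sum_congr rfl fun i _ => ?_
    congr 1
  rw [hA, hB, hC]
  ring
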